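/- Let f = (fᵢⱼ) be a symmetric 2-tensor field on ℝⁿ with Schwartz components. Define J⁰f(x,ξ) = ∫_ℝ Σᵢⱼ fᵢⱼ(x+tξ)ξⁱξʲ dt and J¹f(x,ξ) = ∫_ℝ t Σᵢⱼ fᵢⱼ(x+tξ)ξⁱξʲ dt for (x,ξ) ∈ ℝⁿ × (ℝⁿ∖{0}). Then for each index j, ∂_{ξⱼ} J⁰f(x,ξ) − ∂_{xⱼ} J¹f(x,ξ) = 2 ∫_ℝ Σᵢ fᵢⱼ(x+tξ) ξⁱ dt. -/

import Mathlib

set_option synthInstance.maxHeartbeats 1000000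
set_option maxHeartbeats 1000000
open MeasureTheory SchwartzMap

variable {E F : Type*} [NormedAddCommGroup E] [NormedSpace ℝ E]
  [NormedAddCommGroup F] [NormedSpace ℝ F]

lemma aux_int : Integrable (fun t : ℝ => ((1 + |t|) ^ 2)⁻¹) := by
  have h := integrable_one_add_norm (E := ℝ) (μ := volume) (r := 2) (by norm_num)
  refine h.congr (Filter.Eventually.of_forall fun t => ?_)
  show (1 + ‖t‖) ^ (-2 : ℝ) = ((1 + |t|) ^ 2)⁻¹
  rw [Real.norm_eq_abs, Real.rpow_neg (by positivity), ← Real.rpow_natCast (1 + |t|) 2]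
  norm_num

lemma decay3 (g : 𝓢(E, F)) : ∃ D : ℝ, 0 ≤ D ∧ ∀ z : E, (1 + ‖z‖) ^ 3 * ‖g z‖ ≤ D := by
  refine ⟨2 ^ 3 * (Finset.Iic ((3,0) : ℕ × ℕ)).sup (fun m => SchwartzMap.seminorm ℝ m.1 m.2) g,
    ?_, fun z => ?_⟩
  · positivity
  · have := one_add_le_sup_seminorm_apply (𝕜 := ℝ) (m := ((3,0) : ℕ × ℕ)) (k := 3) (n := 0)
      le_rfl le_rfl g z
    simpa [norm_iteratedFDeriv_zero] using this

lemma line_bound (g : 𝓢(E, F)) {a c : ℝ} (ha : 0 ≤ a) (hc : 0 < c) :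
    ∃ C : ℝ, ∀ (t : ℝ) (z : E), 1 + c * |t| ≤ (1 + a) * (1 + ‖z‖) →
      (1 + |t|) * ‖g z‖ ≤ C * ((1 + |t|) ^ 2)⁻¹ := by
  obtain ⟨D, hD0, hD⟩ := decay3 g
  set m := min c 1 with hm
  have hm0 : 0 < m := lt_min hc one_pos
  refine ⟨(m⁻¹ * (1 + a)) ^ 3 * D, fun t z hz => ?_⟩
  have h1 : m * (1 + |t|) ≤ 1 + c * |t| := by
    have h2 : m ≤ 1 := min_le_right _ _
    have h3 : m ≤ c := min_le_left _ _
    have h4 : 0 ≤ |t| := abs_nonneg t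
    nlinarith
  have h5 : 1 + |t| ≤ m⁻¹ * (1 + a) * (1 + ‖z‖) := by
    rw [mul_assoc, le_inv_mul_iff₀ hm0]
    exact h1.trans hz
  have h6 : (1 + |t|) ^ 3 ≤ (m⁻¹ * (1 + a) * (1 + ‖z‖)) ^ 3 :=
    pow_le_pow_left₀ (by positivity) h5 3
  rw [← div_eq_mul_inv, le_div_iff₀ (by positivity)]
  have hg : 0 ≤ ‖g z‖ := norm_nonneg _
  have h7 : (1 + |t|) ^ 3 * ‖g z‖ ≤ (m⁻¹ * (1 + a)) ^ 3 * ((1 + ‖z‖) ^ 3 * ‖g z‖) := by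
    calc (1 + |t|) ^ 3 * ‖g z‖ ≤ (m⁻¹ * (1 + a) * (1 + ‖z‖)) ^ 3 * ‖g z‖ := by gcongr
    _ = (m⁻¹ * (1 + a)) ^ 3 * ((1 + ‖z‖) ^ 3 * ‖g z‖) := by ring
  have h8 : (m⁻¹ * (1 + a)) ^ 3 * ((1 + ‖z‖) ^ 3 * ‖g z‖) ≤ (m⁻¹ * (1 + a)) ^ 3 * D := by
    have := hD z
    have : (0:ℝ) ≤ (m⁻¹ * (1 + a)) ^ 3 := by positivity
    nlinarith [hD z]
  nlinarith [h7, h8]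

lemma geom_ineq (y v : E) (t : ℝ) :
    1 + ‖v‖ * |t| ≤ (1 + ‖y‖) * (1 + ‖y + t • v‖) := by
  have h1 : ‖t • v‖ ≤ ‖y + t • v‖ + ‖y‖ := by
    calc ‖t • v‖ = ‖(y + t • v) - y‖ := by congr 1; abel
    _ ≤ ‖y + t • v‖ + ‖y‖ := norm_sub_le _ _
  rw [norm_smul, Real.norm_eq_abs] at h1
  have h2 : 0 ≤ ‖y‖ := norm_nonneg _
  have h3 : 0 ≤ ‖y + t • v‖ := norm_nonneg _
  nlinarith

lemma line_decay (g : 𝓢(E, F)) (y : E) {v : E} (hv : v ≠ 0) :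
    ∃ C : ℝ, ∀ t : ℝ, (1 + |t|) * ‖g (y + t • v)‖ ≤ C * ((1 + |t|) ^ 2)⁻¹ := by
  obtain ⟨C, hC⟩ := line_bound g (norm_nonneg y) (norm_pos_iff.2 hv)
  exact ⟨C, fun t => hC t (y + t • v) (geom_ineq y v t)⟩

lemma cont_line (g : 𝓢(E, F)) (y v : E) : Continuous (fun t : ℝ => g (y + t • v)) :=
  g.continuous.comp (continuous_const.add (continuous_id.smul continuous_const))

lemma integ_line (g : 𝓢(E, F)) (y : E) {v : E} (hv : v ≠ 0) :
    Integrable (fun t : ℝ => g (y + t • v)) := by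
  obtain ⟨C, hC⟩ := line_decay g y hv
  refine (aux_int.const_mul C).mono' (cont_line g y v).aestronglyMeasurable
    (Filter.Eventually.of_forall fun t => ?_)
  have h := hC t
  have h1 : (1:ℝ) ≤ 1 + |t| := by simp [abs_nonneg]
  have := norm_nonneg (g (y + t • v))
  nlinarith

lemma integ_line_mul (g : 𝓢(E, F)) (y : E) {v : E} (hv : v ≠ 0) :
    Integrable (fun t : ℝ => t • g (y + t • v)) := by
  obtain ⟨C, hC⟩ := line_decay g y hv
  refine (aux_int.const_mul C).mono'
    ((continuous_id.smul (cont_line g y v)).aestronglyMeasurable)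
    (Filter.Eventually.of_forall fun t => ?_)
  have h := hC t
  rw [norm_smul, Real.norm_eq_abs]
  have h1 : |t| ≤ 1 + |t| := by simp
  have := norm_nonneg (g (y + t • v))
  have := abs_nonneg t
  nlinarith

lemma hasFDerivAt_K (g : 𝓢(E, ℝ)) (x : E) {ξ : E} (hξ : ξ ≠ 0) :
    HasFDerivAt (fun ξ' : E => ∫ t : ℝ, g (x + t • ξ'))
      (∫ t : ℝ, t • fderiv ℝ g (x + t • ξ)) ξ := by
  have hξn : (0:ℝ) < ‖ξ‖ := norm_pos_iff.2 hξ
  have hε : (0:ℝ) < ‖ξ‖ / 2 := by positivity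
  set g' := SchwartzMap.fderivCLM ℝ E ℝ g with hg'
  obtain ⟨C, hC⟩ := line_bound g' (norm_nonneg x) hε
  apply hasFDerivAt_integral_of_dominated_of_fderiv_le
    (F' := fun ξ' (t : ℝ) => t • fderiv ℝ g (x + t • ξ'))
    (bound := fun t => C * ((1 + |t|) ^ 2)⁻¹) (Metric.ball_mem_nhds ξ hε)
  · exact Filter.Eventually.of_forall fun ξ' => (cont_line g x ξ').aestronglyMeasurable
  · exact integ_line g x hξ
  · have hcont : Continuous fun t : ℝ => t • g' (x + t • ξ) :=
      continuous_id.smul (cont_line g' x ξ)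
    simpa [hg', SchwartzMap.fderivCLM_apply] using hcont.aestronglyMeasurable
  · refine Filter.Eventually.of_forall fun t ξ' hξ' => ?_
    have hξ'n : ‖ξ‖ / 2 ≤ ‖ξ'‖ := by
      have h := norm_sub_norm_le ξ ξ'
      have h2 : ‖ξ - ξ'‖ < ‖ξ‖ / 2 := by
        rw [Metric.mem_ball, dist_eq_norm] at hξ'
        rw [norm_sub_rev]; exact hξ'
      linarith
    have hb : 1 + (‖ξ‖ / 2) * |t| ≤ (1 + ‖x‖) * (1 + ‖x + t • ξ'‖) := by
      have h := geom_ineq x ξ' t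
      have := abs_nonneg t
      nlinarith
    have h := hC t (x + t • ξ') hb
    rw [norm_smul t (fderiv ℝ g (x + t • ξ')), Real.norm_eq_abs]
    have hfd : fderiv ℝ g (x + t • ξ') = g' (x + t • ξ') :=
      (SchwartzMap.fderivCLM_apply (𝕜 := ℝ) g _).symm
    rw [hfd]
    have h1 : |t| ≤ 1 + |t| := by simp
    have := norm_nonneg (g' (x + t • ξ'))
    nlinarith
  · exact aux_int.const_mul C
  · refine Filter.Eventually.of_forall fun t ξ' _ => ?_
    have hinner : HasFDerivAt (fun ξ'' : E => x + t • ξ'')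
        (t • ContinuousLinearMap.id ℝ E) ξ' :=
      ((hasFDerivAt_id ξ').const_smul t).const_add x
    have houter : HasFDerivAt g (fderiv ℝ g (x + t • ξ')) (x + t • ξ') :=
      g.differentiableAt.hasFDerivAt
    have hcomp := houter.comp ξ' hinner
    convert hcomp using 1
    ext v
    simp
    ext v
    simp

lemma hasFDerivAt_M (g : 𝓢(E, ℝ)) (x : E) {ξ : E} (hξ : ξ ≠ 0) :
    HasFDerivAt (fun x' : E => ∫ t : ℝ, t * g (x' + t • ξ))
      (∫ t : ℝ, t • fderiv ℝ g (x + t • ξ)) x := by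
  set g' := SchwartzMap.fderivCLM ℝ E ℝ g with hg'
  obtain ⟨C, hC⟩ := line_bound g' (by positivity : (0:ℝ) ≤ ‖x‖ + 1) (norm_pos_iff.2 hξ)
  apply hasFDerivAt_integral_of_dominated_of_fderiv_le
    (F' := fun x' (t : ℝ) => t • fderiv ℝ g (x' + t • ξ))
    (bound := fun t => C * ((1 + |t|) ^ 2)⁻¹) (Metric.ball_mem_nhds x one_pos)
  · exact Filter.Eventually.of_forall fun x' =>
      (continuous_id.smul (cont_line g x' ξ)).aestronglyMeasurable
  · simpa [smul_eq_mul] using integ_line_mul g x hξ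
  · have hcont : Continuous fun t : ℝ => t • g' (x + t • ξ) :=
      continuous_id.smul (cont_line g' x ξ)
    simpa [hg', SchwartzMap.fderivCLM_apply] using hcont.aestronglyMeasurable
  · refine Filter.Eventually.of_forall fun t x' hx' => ?_
    have hx'n : ‖x'‖ ≤ ‖x‖ + 1 := by
      have h := norm_sub_norm_le x' x
      rw [Metric.mem_ball, dist_eq_norm] at hx'
      linarith
    have hb : 1 + ‖ξ‖ * |t| ≤ (1 + (‖x‖ + 1)) * (1 + ‖x' + t • ξ‖) := by
      have h := geom_ineq x' ξ t
      have h2 := norm_nonneg (x' + t • ξ)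
      nlinarith
    have h := hC t (x' + t • ξ) hb
    rw [norm_smul t (fderiv ℝ g (x' + t • ξ)), Real.norm_eq_abs]
    have hfd : fderiv ℝ g (x' + t • ξ) = g' (x' + t • ξ) :=
      (SchwartzMap.fderivCLM_apply (𝕜 := ℝ) g _).symm
    rw [hfd]
    have h1 : |t| ≤ 1 + |t| := by simp
    have := norm_nonneg (g' (x' + t • ξ))
    nlinarith
  · exact aux_int.const_mul C
  · refine Filter.Eventually.of_forall fun t x' _ => ?_
    have hinner : HasFDerivAt (fun x'' : E => x'' + t • ξ)
        (ContinuousLinearMap.id ℝ E) x' :=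
      (hasFDerivAt_id x').add_const (t • ξ)
    have houter : HasFDerivAt g (fderiv ℝ g (x' + t • ξ)) (x' + t • ξ) :=
      g.differentiableAt.hasFDerivAt
    have hcomp := (houter.comp x' hinner).const_mul t
    convert hcomp using 1
    · rfl
    · rfl
    · ext v; simp



open scoped BigOperators

/-- for a symmetric Schwartz 2-tensor field f on ℝⁿ,
∂_{ξⱼ} J⁰f − ∂_{xⱼ} J¹f = 2 ∫ Σᵢ fᵢⱼ(x+tξ)ξⁱ dt on ℝⁿ × (ℝⁿ∖{0}). -/
theorem stmt_15 (n : ℕ)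
    (f : Fin n → Fin n → SchwartzMap (EuclideanSpace ℝ (Fin n)) ℝ)
    (hsymm : ∀ i j, f i j = f j i)
    (x ξ : EuclideanSpace ℝ (Fin n)) (hξ : ξ ≠ 0) (j : Fin n) :
    fderiv ℝ (fun ξ' : EuclideanSpace ℝ (Fin n) =>
        ∫ t : ℝ, ∑ i, ∑ k, f i k (x + t • ξ') * ξ' i * ξ' k) ξ
        (EuclideanSpace.single j 1) -
      fderiv ℝ (fun x' : EuclideanSpace ℝ (Fin n) =>
        ∫ t : ℝ, t * ∑ i, ∑ k, f i k (x' + t • ξ) * ξ i * ξ k) x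
        (EuclideanSpace.single j 1) =
    2 * ∫ t : ℝ, ∑ i, f i j (x + t • ξ) * ξ i := by
  classical
  have hP : ∀ (i : Fin n) (y : EuclideanSpace ℝ (Fin n)),
      HasFDerivAt (fun ξ' : EuclideanSpace ℝ (Fin n) => ξ' i)
        (EuclideanSpace.proj (𝕜 := ℝ) i) y :=
    fun i y => (EuclideanSpace.proj (𝕜 := ℝ) i).hasFDerivAt
  -- Φ side
  have hΦsum : HasFDerivAt
      (fun ξ' : EuclideanSpace ℝ (Fin n) =>
        ∑ i, ∑ k, (∫ t : ℝ, f i k (x + t • ξ')) * ξ' i * ξ' k)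
      (∑ i, ∑ k,
        (((∫ t : ℝ, f i k (x + t • ξ)) * ξ i) • EuclideanSpace.proj (𝕜 := ℝ) k +
          ξ k • ((∫ t : ℝ, f i k (x + t • ξ)) • EuclideanSpace.proj (𝕜 := ℝ) i +
            ξ i • (∫ t : ℝ, t • fderiv ℝ (f i k) (x + t • ξ))))) ξ :=
    HasFDerivAt.fun_sum fun i _ => HasFDerivAt.fun_sum fun k _ =>
      ((hasFDerivAt_K (f i k) x hξ).mul (hP i ξ)).mul (hP k ξ)
  have hev : (fun ξ' : EuclideanSpace ℝ (Fin n) =>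
        ∫ t : ℝ, ∑ i, ∑ k, f i k (x + t • ξ') * ξ' i * ξ' k)
      =ᶠ[nhds ξ] (fun ξ' : EuclideanSpace ℝ (Fin n) =>
        ∑ i, ∑ k, (∫ t : ℝ, f i k (x + t • ξ')) * ξ' i * ξ' k) := by
    filter_upwards [Metric.ball_mem_nhds ξ (norm_pos_iff.2 hξ)] with ξ' hξ'
    have h0 : ξ' ≠ 0 := by
      rintro rfl
      rw [Metric.mem_ball, dist_eq_norm, zero_sub, norm_neg] at hξ'
      exact lt_irrefl _ hξ'
    rw [MeasureTheory.integral_finset_sum _ (fun i _ =>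
      integrable_finset_sum _ (fun k _ =>
        ((integ_line (f i k) x h0).mul_const (ξ' i)).mul_const (ξ' k)))]
    refine Finset.sum_congr rfl fun i _ => ?_
    rw [MeasureTheory.integral_finset_sum _ (fun k _ =>
      ((integ_line (f i k) x h0).mul_const (ξ' i)).mul_const (ξ' k))]
    refine Finset.sum_congr rfl fun k _ => ?_
    rw [MeasureTheory.integral_mul_const, MeasureTheory.integral_mul_const]
  have e1 := (hΦsum.congr_of_eventuallyEq hev).fderiv
  -- Ψ side
  have hMt : ∀ (i k : Fin n) (x' : EuclideanSpace ℝ (Fin n)),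
      MeasureTheory.Integrable (fun t : ℝ => t * f i k (x' + t • ξ)) := fun i k x' => by
    simpa [smul_eq_mul] using integ_line_mul (f i k) x' hξ
  have hΨeq : (fun x' : EuclideanSpace ℝ (Fin n) =>
        ∫ t : ℝ, t * ∑ i, ∑ k, f i k (x' + t • ξ) * ξ i * ξ k)
      = fun x' : EuclideanSpace ℝ (Fin n) =>
        ∑ i, ∑ k, (∫ t : ℝ, t * f i k (x' + t • ξ)) * (ξ i * ξ k) := by
    funext x'
    have hre : ∀ t : ℝ, t * ∑ i, ∑ k, f i k (x' + t • ξ) * ξ i * ξ k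
        = ∑ i, ∑ k, (t * f i k (x' + t • ξ)) * (ξ i * ξ k) := by
      intro t
      rw [Finset.mul_sum]
      refine Finset.sum_congr rfl fun i _ => ?_
      rw [Finset.mul_sum]
      refine Finset.sum_congr rfl fun k _ => ?_
      ring
    simp_rw [hre]
    rw [MeasureTheory.integral_finset_sum _ (fun i _ =>
      integrable_finset_sum _ (fun k _ => (hMt i k x').mul_const (ξ i * ξ k)))]
    refine Finset.sum_congr rfl fun i _ => ?_
    rw [MeasureTheory.integral_finset_sum _ (fun k _ => (hMt i k x').mul_const (ξ i * ξ k))]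
    refine Finset.sum_congr rfl fun k _ => ?_
    rw [MeasureTheory.integral_mul_const]
  have hΨsum : HasFDerivAt
      (fun x' : EuclideanSpace ℝ (Fin n) =>
        ∑ i, ∑ k, (∫ t : ℝ, t * f i k (x' + t • ξ)) * (ξ i * ξ k))
      (∑ i, ∑ k, (ξ i * ξ k) • (∫ t : ℝ, t • fderiv ℝ (f i k) (x + t • ξ))) x :=
    HasFDerivAt.fun_sum fun i _ => HasFDerivAt.fun_sum fun k _ =>
      (hasFDerivAt_M (f i k) x hξ).mul_const (ξ i * ξ k)
  have e2 : fderiv ℝ (fun x' : EuclideanSpace ℝ (Fin n) =>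
        ∫ t : ℝ, t * ∑ i, ∑ k, f i k (x' + t • ξ) * ξ i * ξ k) x
      = ∑ i, ∑ k, (ξ i * ξ k) • (∫ t : ℝ, t • fderiv ℝ (f i k) (x + t • ξ)) := by
    rw [hΨeq]; exact hΨsum.fderiv
  rw [e1, e2]
  -- RHS
  rw [MeasureTheory.integral_finset_sum _ (fun i _ =>
    (integ_line (f i j) x hξ).mul_const (ξ i))]
  simp_rw [MeasureTheory.integral_mul_const]
  simp only [ContinuousLinearMap.sum_apply, ContinuousLinearMap.add_apply,
    ContinuousLinearMap.smul_apply, smul_eq_mul, PiLp.proj_apply,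
    EuclideanSpace.single_apply]
  have key : ∀ (A l : Fin n → Fin n → ℝ), (∀ i k, A i k = A k i) →
      ((∑ i, ∑ k, (A i k * ξ i * (if k = j then 1 else 0) +
          ξ k * (A i k * (if i = j then 1 else 0) + ξ i * l i k))) -
        ∑ i, ∑ k, ξ i * ξ k * l i k) = 2 * ∑ i, A i j * ξ i := by
    intro A l hA
    rw [← Finset.sum_sub_distrib]
    rw [show (∑ i, (∑ k, (A i k * ξ i * (if k = j then 1 else 0) +
          ξ k * (A i k * (if i = j then 1 else 0) + ξ i * l i k)) -
          ∑ k, ξ i * ξ k * l i k)) =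
        ∑ i, ∑ k, ((A i k * ξ i * (if k = j then 1 else 0) +
          ξ k * (A i k * (if i = j then 1 else 0) + ξ i * l i k)) - ξ i * ξ k * l i k) from
      Finset.sum_congr rfl fun i _ => (Finset.sum_sub_distrib ..).symm]
    have hterm : ∀ i k, (A i k * ξ i * (if k = j then 1 else 0) +
        ξ k * (A i k * (if i = j then 1 else 0) + ξ i * l i k)) - ξ i * ξ k * l i k
        = (if k = j then A i k * ξ i else 0) + (if i = j then ξ k * A i k else 0) :=
      fun i k => by by_cases h1 : k = j <;> by_cases h2 : i = j <;> simp [h1, h2] <;> ring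
    simp_rw [hterm, Finset.sum_add_distrib]
    have h1 : (∑ i, ∑ k, if k = j then A i k * ξ i else 0) = ∑ i, A i j * ξ i := by simp
    have h2 : (∑ i, ∑ k, if i = j then ξ k * A i k else 0) = ∑ k, ξ k * A j k := by
      rw [Finset.sum_comm]; simp
    rw [h1, h2, two_mul]
    congr 1
    exact Finset.sum_congr rfl fun k _ => by rw [hA j k]; ring
  exact key (fun i k => ∫ t : ℝ, f i k (x + t • ξ))
    (fun i k => (∫ t : ℝ, t • fderiv ℝ (f i k) (x + t • ξ)) (EuclideanSpace.single j 1))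
    (fun i k => show (∫ t : ℝ, f i k (x + t • ξ)) = ∫ t : ℝ, f k i (x + t • ξ) by
      rw [hsymm i k])
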